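/- Let d ≥ 2 and G ≤ Aut(T_d) be a strongly fractal group such that every left Engel element of G lies in St_G(1). Then G has no nontrivial left Engel elements: L(G) = 1. -/

import Mathlib

/-- Vertices of the rooted `d`-adic tree `T_d` are finite words over `Fin d`. -/
abbrev Vertex (d : ℕ) : Type := List (Fin d)

/-- A permutation of the vertices of `T_d` is a tree automorphism iff it (and its
inverse) preserves word length (levels) and the prefix relation (adjacency). -/
def IsTreeAut (d : ℕ) (e : Equiv.Perm (Vertex d)) : Prop :=
  (∀ l, (e l).length = l.length) ∧ (∀ l, (e.symm l).length = l.length) ∧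
    (∀ l₁ l₂ : Vertex d, l₁ <+: l₂ → e l₁ <+: e l₂) ∧
    (∀ l₁ l₂ : Vertex d, l₁ <+: l₂ → e.symm l₁ <+: e.symm l₂)

/-- The group `Aut T_d` of automorphisms of the rooted `d`-adic tree. -/
def treeAutGroup (d : ℕ) : Subgroup (Equiv.Perm (Vertex d)) where
  carrier := {e | IsTreeAut d e}
  one_mem' := ⟨fun _ => rfl, fun _ => rfl, fun _ _ h => h, fun _ _ h => h⟩
  mul_mem' := by
    rintro a b ⟨ha1, ha2, ha3, ha4⟩ ⟨hb1, hb2, hb3, hb4⟩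
    exact ⟨fun l => by simp [Equiv.Perm.mul_def, ha1, hb1],
      fun l => by simp [Equiv.Perm.mul_def, ha2, hb2],
      fun l₁ l₂ h => by simpa [Equiv.Perm.mul_def] using ha3 _ _ (hb3 _ _ h),
      fun l₁ l₂ h => by simpa [Equiv.Perm.mul_def] using hb4 _ _ (ha4 _ _ h)⟩
  inv_mem' := by
    rintro a ⟨ha1, ha2, ha3, ha4⟩
    exact ⟨ha2, fun l => ha1 l,
      ha4, fun l₁ l₂ h => ha3 _ _ h⟩

/-- The `n`-th level stabilizer `St(n)` in `Aut T_d`: automorphisms fixing every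
vertex of the first `n` levels. -/
def levelStab (d n : ℕ) : Subgroup (treeAutGroup d) where
  carrier := {g | ∀ l : Vertex d, l.length ≤ n → g.val l = l}
  one_mem' := fun _ _ => rfl
  mul_mem' := by
    intro a b ha hb l hl
    have : ((a * b : treeAutGroup d) : Equiv.Perm (Vertex d)) l = a.val (b.val l) := rfl
    rw [this, hb l hl, ha l hl]
  inv_mem' := by
    intro a ha l hl
    have h := ha l hl
    have : ((a⁻¹ : treeAutGroup d) : Equiv.Perm (Vertex d)) l = a.val⁻¹ l := rfl
    rw [this]
    calc a.val⁻¹ l = a.val⁻¹ (a.val l) := by rw [h]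
    _ = l := by simp

/-- `t` is the section of `g` at the first-level vertex `i`: for some first-level
vertex `j` (the image of `i` under `g`), `g (i w) = j (t w)` for all words `w`.
This uniquely determines `t`, and corresponds to the `i`-th component of the
canonical isomorphism `ψ : St(1) → (Aut T_d)^d` when `g ∈ St(1)` (where `j = i`). -/
def IsSection {d : ℕ} (g t : treeAutGroup d) (i : Fin d) : Prop :=
  ∃ j : Fin d, ∀ w : Vertex d, g.val (i :: w) = j :: t.val w

/-- Iterated commutator `[x, g, ..., g]` (with `n` copies of `g`), where
`[x,g] = x⁻¹g⁻¹xg`, `engel x g 0 = x`. -/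
def engel {G : Type*} [Group G] (x g : G) : ℕ → G
  | 0 => x
  | n + 1 => (engel x g n)⁻¹ * g⁻¹ * engel x g n * g

/-- `g` is a left Engel element of the subgroup `G`: for every `x ∈ G` some
iterated commutator `[x, g, ..., g]` is trivial. -/
def IsLeftEngelIn {X : Type*} [Group X] (G : Subgroup X) (g : X) : Prop :=
  ∀ x ∈ G, ∃ n, 1 ≤ n ∧ engel x g n = 1

/-- `a'` is the section of `a` at `i` with image vertex also `i`. -/
def SecAt {d : ℕ} (a a' : treeAutGroup d) (i : Fin d) : Prop :=
  ∀ w : Vertex d, a.val (i :: w) = i :: a'.val w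

lemma SecAt.mul {d : ℕ} {a a' b b' : treeAutGroup d} {i : Fin d}
    (ha : SecAt a a' i) (hb : SecAt b b' i) : SecAt (a * b) (a' * b') i := by
  intro w
  have h1 : ((a * b : treeAutGroup d) : Equiv.Perm (Vertex d)) (i :: w)
      = a.val (b.val (i :: w)) := rfl
  have h2 : ((a' * b' : treeAutGroup d) : Equiv.Perm (Vertex d)) w
      = a'.val (b'.val w) := rfl
  rw [h1, h2, hb w, ha]

lemma SecAt.inv {d : ℕ} {a a' : treeAutGroup d} {i : Fin d}
    (ha : SecAt a a' i) : SecAt a⁻¹ a'⁻¹ i := by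
  intro w
  have h1 : ((a⁻¹ : treeAutGroup d) : Equiv.Perm (Vertex d)) = a.val⁻¹ := rfl
  have h2 : ((a'⁻¹ : treeAutGroup d) : Equiv.Perm (Vertex d)) = a'.val⁻¹ := rfl
  rw [h1, h2]
  have h := ha (a'.val⁻¹ w)
  have h3 : a'.val (a'.val⁻¹ w) = w := by simp
  rw [h3] at h
  rw [← h]
  simp

lemma secAt_engel {d : ℕ} {h g x t : treeAutGroup d} {i : Fin d}
    (hh : SecAt h x i) (hg : SecAt g t i) :
    ∀ n, SecAt (engel h g n) (engel x t n) i := by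
  intro n
  induction n with
  | zero => exact hh
  | succ n ih => exact ((ih.inv.mul hg.inv).mul ih).mul hg

lemma secAt_of_isSection {d : ℕ} {g t : treeAutGroup d} {i : Fin d}
    (hg : g ∈ levelStab d 1) (hs : IsSection g t i) : SecAt g t i := by
  obtain ⟨j, hj⟩ := hs
  have htnil : t.val ([] : Vertex d) = [] := by
    have := t.property.1 ([] : Vertex d)
    exact List.length_eq_zero_iff.mp this
  have hgi : g.val [i] = [i] := hg [i] (by simp)
  have hji : j = i := by
    have := hj []
    rw [htnil, hgi] at this
    exact (List.cons.injEq _ _ _ _ ▸ this.symm).1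
  intro w
  rw [hj w, hji]

lemma treeAut_eq_one {d : ℕ} {e : treeAutGroup d}
    (h : ∀ w : Vertex d, e.val w = w) : e = 1 := by
  apply Subtype.ext
  exact Equiv.ext h

theorem stmt_13 (d : ℕ) (hd : 2 ≤ d) (G : Subgroup (treeAutGroup d))
    (hself : ∀ g ∈ G, ∀ i : Fin d, ∃ t ∈ G, IsSection g t i)
    (hfrac : ∀ i : Fin d, ∀ x ∈ G, ∃ h, h ∈ G ∧ h ∈ levelStab d 1 ∧ IsSection h x i)
    (hst : ∀ g ∈ G, IsLeftEngelIn G g → g ∈ levelStab d 1) :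
    ∀ g ∈ G, IsLeftEngelIn G g → g = 1 := by
  -- sections of Engel elements are Engel
  have key : ∀ g ∈ G, IsLeftEngelIn G g → ∀ t ∈ G, ∀ i : Fin d,
      SecAt g t i → IsLeftEngelIn G t := by
    intro g hgG hgE t _htG i hsec x hxG
    obtain ⟨h, hhG, hh1, hhs⟩ := hfrac i x hxG
    have hhsec : SecAt h x i := secAt_of_isSection hh1 hhs
    obtain ⟨n, hn1, hn⟩ := hgE h hhG
    refine ⟨n, hn1, treeAut_eq_one fun w => ?_⟩
    have := secAt_engel hhsec hsec n w
    rw [hn] at this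
    have h1 : ((1 : treeAutGroup d) : Equiv.Perm (Vertex d)) (i :: w) = i :: w := rfl
    rw [h1] at this
    exact (List.cons.injEq _ _ _ _ ▸ this).2.symm
  -- every Engel element fixes every vertex
  have fix : ∀ l : Vertex d, ∀ g ∈ G, IsLeftEngelIn G g → g.val l = l := by
    intro l
    induction l with
    | nil =>
      intro g hgG hgE
      exact hst g hgG hgE [] (by simp)
    | cons i w ih =>
      intro g hgG hgE
      obtain ⟨t, htG, hts⟩ := hself g hgG i
      have hsec : SecAt g t i := secAt_of_isSection (hst g hgG hgE) hts
      rw [hsec w, ih t htG (key g hgG hgE t htG i hsec)]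
  intro g hgG hgE
  exact treeAut_eq_one fun w => fix w g hgG hgE
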